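/- Let X₁,...,Xₙ be independent random variables taking values in [0,1], and let S = ∑ᵢ Xᵢ. Then 1/(1 + E[S]) ≤ E[1/(1 + S)] ≤ (1 - exp(-E[S]))/E[S] ≤ 1/E[S]. -/

import Mathlib

open MeasureTheory ProbabilityTheory Real

private lemma rpow_le_lin' {t x : ℝ} (ht0 : 0 ≤ t) (hx0 : 0 ≤ x) (hx1 : x ≤ 1) :
    t ^ x ≤ (t - 1) * x + 1 := by
  have h := Real.geom_mean_le_arith_mean2_weighted hx0 (by linarith : (0:ℝ) ≤ 1 - x)
    ht0 zero_le_one (by ring)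
  calc t ^ x = t ^ x * (1:ℝ) ^ (1 - x) := by rw [Real.one_rpow, mul_one]
    _ ≤ x * t + (1 - x) * 1 := h
    _ = (t - 1) * x + 1 := by ring

private lemma exp_int' {m : ℝ} (hm : 0 < m) :
    ∫ t in Set.Ioc (0:ℝ) 1, exp ((t-1)*m) = (1 - exp (-m))/m := by
  rw [← intervalIntegral.integral_of_le zero_le_one]
  have hderiv : ∀ t ∈ Set.uIcc (0:ℝ) 1,
      HasDerivAt (fun u : ℝ => exp ((u-1)*m)/m) (exp ((t-1)*m)) t := by
    intro t _
    have h1 : HasDerivAt (fun u : ℝ => (u - 1)*m) (1 * m) t :=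
      ((hasDerivAt_id t).sub_const 1).mul_const m
    have h2 := (h1.exp).div_const m
    rw [one_mul, mul_div_assoc, div_self hm.ne', mul_one] at h2
    exact h2
  rw [intervalIntegral.integral_eq_sub_of_hasDerivAt hderiv
    ((by fun_prop : Continuous fun t : ℝ => exp ((t-1)*m)).intervalIntegrable 0 1)]
  rw [show ((1:ℝ)-1)*m = 0 by ring, show ((0:ℝ)-1)*m = -m by ring, Real.exp_zero]
  ring

/-- Let `X₁, …, Xₙ` be independent random variables with values in `[0,1]` and
`S = ∑ᵢ Xᵢ` with `E[S] > 0`.  Then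
`1/(1 + E[S]) ≤ E[1/(1 + S)] ≤ (1 - exp (-E[S]))/E[S] ≤ 1/E[S]`. -/
theorem stmt1 {Ω : Type*} [MeasurableSpace Ω] (μ : Measure Ω) [IsProbabilityMeasure μ]
    (n : ℕ) (X : Fin n → Ω → ℝ)
    (hmeas : ∀ i, Measurable (X i))
    (hval : ∀ i ω, X i ω ∈ Set.Icc (0 : ℝ) 1)
    (hindep : iIndepFun X μ)
    (hpos : 0 < ∫ ω, (∑ i, X i ω) ∂μ) :
    1 / (1 + ∫ ω, (∑ i, X i ω) ∂μ) ≤ ∫ ω, 1 / (1 + ∑ i, X i ω) ∂μ ∧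
    (∫ ω, 1 / (1 + ∑ i, X i ω) ∂μ) ≤
      (1 - Real.exp (-(∫ ω, (∑ i, X i ω) ∂μ))) / (∫ ω, (∑ i, X i ω) ∂μ) ∧
    (1 - Real.exp (-(∫ ω, (∑ i, X i ω) ∂μ))) / (∫ ω, (∑ i, X i ω) ∂μ) ≤
      1 / (∫ ω, (∑ i, X i ω) ∂μ) := by
  classical
  set S : Ω → ℝ := fun ω => ∑ i, X i ω with hSdef
  have hrw : ∀ ω, ∑ i, X i ω = S ω := fun ω => rfl
  simp only [hrw] at hpos ⊢
  set m : ℝ := ∫ ω, S ω ∂μ with hmdef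
  have hSm : Measurable S := by
    apply Finset.measurable_sum
    exact fun i _ => hmeas i
  have hS0 : ∀ ω, 0 ≤ S ω := fun ω => Finset.sum_nonneg fun i _ => (hval i ω).1
  have hXint : ∀ i, Integrable (X i) μ := by
    intro i
    refine (integrable_const (1:ℝ)).mono' (hmeas i).aestronglyMeasurable (ae_of_all _ fun ω => ?_)
    rw [Real.norm_eq_abs, abs_le]
    exact ⟨by linarith [(hval i ω).1], (hval i ω).2⟩
  have hSint : Integrable S μ := integrable_finset_sum _ fun i _ => hXint i
  have hmsum : m = ∑ i, ∫ ω, X i ω ∂μ := integral_finset_sum _ fun i _ => hXint i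
  have hm0 : 0 < m := hpos
  have hIint : Integrable (fun ω => 1 / (1 + S ω)) μ := by
    refine (integrable_const (1:ℝ)).mono'
      ((hSm.const_add 1).inv.aestronglyMeasurable.congr ?_) (ae_of_all _ fun ω => ?_)
    · exact ae_of_all _ fun ω => (one_div _).symm
    · rw [Real.norm_eq_abs, abs_le]
      have h1 : (0:ℝ) < 1 + S ω := by linarith [hS0 ω]
      constructor
      · have := le_of_lt (div_pos one_pos h1); linarith
      · rw [div_le_one h1]; linarith [hS0 ω]
  -- Part 1 : Jensen via tangent line
  have part1 : 1 / (1 + m) ≤ ∫ ω, 1 / (1 + S ω) ∂μ := by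
    have key : ∀ ω, 1/(1+m) - (S ω - m)/(1+m)^2 ≤ 1/(1 + S ω) := by
      intro ω
      have h1 : (0:ℝ) < 1 + S ω := by linarith [hS0 ω]
      have h2 : (0:ℝ) < 1 + m := by linarith
      have keyid : 1/(1 + S ω) - (1/(1+m) - (S ω - m)/(1+m)^2)
          = (S ω - m)^2 / ((1 + S ω)*(1+m)^2) := by field_simp; ring
      nlinarith [div_nonneg (sq_nonneg (S ω - m))
        (by positivity : (0:ℝ) ≤ (1 + S ω)*(1+m)^2)]
    have hint1 : Integrable (fun ω => 1/(1+m) - (S ω - m)/(1+m)^2) μ :=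
      (integrable_const _).sub ((hSint.sub (integrable_const m)).div_const _)
    have h := integral_mono hint1 hIint key
    have hsub : Integrable (fun ω => (S ω - m)/(1+m)^2) μ := by
      exact (hSint.sub (integrable_const m)).div_const _
    have hcalc : ∫ ω, (1/(1+m) - (S ω - m)/(1+m)^2) ∂μ = 1/(1+m) := by
      rw [integral_sub (integrable_const _) hsub, integral_const, integral_div,
        integral_sub hSint (integrable_const m), integral_const]
      simp [← hmdef]
    rwa [hcalc] at h
  -- Part 3
  have part3 : (1 - exp (-m)) / m ≤ 1 / m :=
    (div_le_div_iff_of_pos_right hm0).mpr (by linarith [Real.exp_pos (-m)])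
  -- Part 2
  refine ⟨part1, ?_, part3⟩
  set ν : Measure ℝ := volume.restrict (Set.Ioc (0:ℝ) 1) with hνdef
  haveI : IsFiniteMeasure ν := by
    constructor
    rw [hνdef, Measure.restrict_apply_univ, Real.volume_Ioc]
    exact ENNReal.ofReal_lt_top
  have hael : ∀ᵐ p ∂(μ.prod ν), p.2 ∈ Set.Ioc (0:ℝ) 1 := by
    rw [ae_iff]
    have hset : {p : Ω × ℝ | ¬ p.2 ∈ Set.Ioc (0:ℝ) 1}
        = Set.univ ×ˢ (Set.Ioc (0:ℝ) 1)ᶜ := by ext p; simp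
    rw [hset, Measure.prod_prod, hνdef,
      Measure.restrict_apply measurableSet_Ioc.compl]
    simp
  have hgmeas : Measurable (fun p : Ω × ℝ => exp (log p.2 * S p.1)) :=
    ((Real.measurable_log.comp measurable_snd).mul (hSm.comp measurable_fst)).exp
  have hfaesm : AEStronglyMeasurable (fun p : Ω × ℝ => p.2 ^ S p.1) (μ.prod ν) := by
    refine hgmeas.aestronglyMeasurable.congr ?_
    filter_upwards [hael] with p hp
    rw [Real.rpow_def_of_pos hp.1]
  have haebound : ∀ᵐ p ∂(μ.prod ν), ‖p.2 ^ S p.1‖ ≤ 1 := by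
    filter_upwards [hael] with p hp
    rw [Real.norm_eq_abs, abs_of_nonneg (Real.rpow_nonneg hp.1.le _)]
    exact Real.rpow_le_one hp.1.le hp.2 (hS0 _)
  have hFint : Integrable (fun p : Ω × ℝ => p.2 ^ S p.1) (μ.prod ν) :=
    (integrable_const (1:ℝ)).mono' hfaesm haebound
  have hA : ∀ ω, 1/(1 + S ω) = ∫ t, t ^ S ω ∂ν := by
    intro ω
    rw [hνdef, ← intervalIntegral.integral_of_le zero_le_one,
      integral_rpow (Or.inl (by linarith [hS0 ω] : (-1:ℝ) < S ω)), Real.one_rpow,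
      Real.zero_rpow (by linarith [hS0 ω] : S ω + 1 ≠ 0), sub_zero, add_comm]
  have hswap : ∫ ω, (∫ t, t ^ S ω ∂ν) ∂μ = ∫ t, (∫ ω, t ^ S ω ∂μ) ∂ν :=
    integral_integral_swap hFint
  -- bound the inner integral for each t
  have hC : ∀ t ∈ Set.Ioc (0:ℝ) 1, ∫ ω, t ^ S ω ∂μ ≤ exp ((t-1)*m) := by
    rintro t ⟨ht0, ht1⟩
    have hCi : ∀ i : Fin n, mgf (X i) μ (log t) ≤ exp ((t-1) * ∫ ω, X i ω ∂μ) := by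
      intro i
      have hexp_int : Integrable (fun ω => exp (log t * X i ω)) μ := by
        refine (integrable_const (1:ℝ)).mono'
          (((hmeas i).const_mul _).exp.aestronglyMeasurable) (ae_of_all _ fun ω => ?_)
        rw [Real.norm_eq_abs, abs_of_nonneg (Real.exp_pos _).le, Real.exp_le_one_iff]
        exact mul_nonpos_of_nonpos_of_nonneg (Real.log_nonpos ht0.le ht1) (hval i ω).1
      have hlin_int : Integrable (fun ω => (t - 1) * X i ω + 1) μ :=
        ((hXint i).const_mul _).add (integrable_const 1)
      have h1 : mgf (X i) μ (log t) ≤ ∫ ω, ((t - 1) * X i ω + 1) ∂μ := by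
        refine integral_mono hexp_int hlin_int fun ω => ?_
        rw [← Real.rpow_def_of_pos ht0]
        exact rpow_le_lin' ht0.le (hval i ω).1 (hval i ω).2
      have h2 : ∫ ω, ((t - 1) * X i ω + 1) ∂μ = (t - 1) * (∫ ω, X i ω ∂μ) + 1 := by
        rw [integral_add ((hXint i).const_mul _) (integrable_const 1),
          integral_const_mul, integral_const]
        simp
      calc mgf (X i) μ (log t) ≤ (t - 1) * (∫ ω, X i ω ∂μ) + 1 := by rw [← h2]; exact h1
        _ ≤ exp ((t-1) * ∫ ω, X i ω ∂μ) := Real.add_one_le_exp _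
    have heq : (fun ω => t ^ S ω) = fun ω => exp (log t * (∑ i, X i) ω) := by
      funext ω
      rw [Real.rpow_def_of_pos ht0]
      simp [hSdef, Finset.sum_apply]
    calc ∫ ω, t ^ S ω ∂μ = mgf (∑ i, X i) μ (log t) := by rw [heq]; rfl
      _ = ∏ i, mgf (X i) μ (log t) := hindep.mgf_sum hmeas Finset.univ
      _ ≤ ∏ i, exp ((t-1) * ∫ ω, X i ω ∂μ) :=
          Finset.prod_le_prod (fun i _ => mgf_nonneg) (fun i _ => hCi i)
      _ = exp ((t-1) * m) := by
          rw [← Real.exp_sum]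
          congr 1
          rw [hmsum, Finset.mul_sum]
  have hLint : IntegrableOn (fun t => ∫ ω, t ^ S ω ∂μ) (Set.Ioc (0:ℝ) 1) volume :=
    hFint.integral_prod_right
  have hRint : IntegrableOn (fun t => exp ((t-1)*m)) (Set.Ioc (0:ℝ) 1) volume :=
    (by fun_prop : Continuous fun t : ℝ => exp ((t-1)*m)).integrableOn_Ioc
  have hD : ∫ t, (∫ ω, t ^ S ω ∂μ) ∂ν ≤ ∫ t in Set.Ioc (0:ℝ) 1, exp ((t-1)*m) :=
    setIntegral_mono_on hLint hRint measurableSet_Ioc hC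
  calc ∫ ω, 1 / (1 + S ω) ∂μ = ∫ ω, (∫ t, t ^ S ω ∂ν) ∂μ :=
        integral_congr_ae (ae_of_all _ hA)
    _ = ∫ t, (∫ ω, t ^ S ω ∂μ) ∂ν := hswap
    _ ≤ ∫ t in Set.Ioc (0:ℝ) 1, exp ((t-1)*m) := hD
    _ = (1 - exp (-m))/m := exp_int' hm0
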